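/- For every integer k ≥ 3, 1 + L_{k−3} ≤ L_k; equivalently, the expected number of departures C_k = 1 + L_{k−3} from a fully occupied circle of k nodes is at most the expected number L_k of departures from a fully occupied line of k nodes. -/

import Mathlib

/-- `Lseg n = Σ_{k=1}^{n} (−1)^{k+1} (2^{k−1}/k!) (n−k+1)`, the expected number of
transmissions in one slot from a fully occupied segment of `n` nodes (so `Lseg 0 = 0`). -/
noncomputable def Lseg (n : ℕ) : ℝ :=
  ∑ k ∈ Finset.Icc 1 n,
    (-1 : ℝ) ^ (k + 1) * (2 ^ (k - 1) / (Nat.factorial k : ℝ)) * ((n : ℝ) - (k : ℝ) + 1)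

noncomputable def Scoef (j : ℕ) : ℝ :=
  (-1 : ℝ) ^ (j + 1) * (2 ^ (j - 1) / (Nat.factorial j : ℝ))

noncomputable def Spart (n : ℕ) : ℝ := ∑ j ∈ Finset.Icc 1 n, Scoef j

lemma Sstep (n : ℕ) : Spart (n + 1) = Spart n + Scoef (n + 1) := by
  unfold Spart
  rw [Finset.sum_Icc_succ_top (by omega : 1 ≤ n + 1)]

lemma S0 : Spart 0 = 0 := by simp [Spart]

lemma S1 : Spart 1 = 1 := by
  rw [show (1:ℕ) = 0+1 from rfl, Sstep, S0]; norm_num [Scoef, Nat.factorial]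

lemma S2 : Spart 2 = 0 := by
  rw [show (2:ℕ) = 1+1 from rfl, Sstep, S1]; norm_num [Scoef, Nat.factorial]

lemma S3 : Spart 3 = 2/3 := by
  rw [show (3:ℕ) = 2+1 from rfl, Sstep, S2]; norm_num [Scoef, Nat.factorial]

lemma S4 : Spart 4 = 1/3 := by
  rw [show (4:ℕ) = 3+1 from rfl, Sstep, S3]; norm_num [Scoef, Nat.factorial]

-- pair of consecutive terms starting at odd index is nonnegative
lemma pair_nonneg (t : ℕ) : 0 ≤ Scoef (2*t+1) + Scoef (2*t+2) := by
  unfold Scoef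
  have h1 : ((-1:ℝ)) ^ (2*t+1+1) = 1 := by
    rw [show 2*t+1+1 = 2*(t+1) from by ring, pow_mul]; norm_num
  have h2 : ((-1:ℝ)) ^ (2*t+2+1) = -1 := by
    rw [show 2*t+2+1 = 2*(t+1)+1 from by ring, pow_succ, pow_mul]; norm_num
  rw [h1, h2]
  have hf1 : (0:ℝ) < (Nat.factorial (2*t+1) : ℝ) := by positivity
  have hf2 : (Nat.factorial (2*t+2) : ℝ) = (2*t+2) * Nat.factorial (2*t+1) := by
    rw [show 2*t+2 = (2*t+1)+1 from rfl, Nat.factorial_succ]; push_cast; ring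
  have hp : (2:ℝ)^(2*t+2-1) = 2 * 2^(2*t+1-1) := by
    rw [show 2*t+2-1 = (2*t+1-1)+1 from by omega, pow_succ]; ring
  rw [hf2, hp]
  have hle : 2 * (2:ℝ) ^ (2*t+1-1) / ((2*(t:ℝ)+2) * (Nat.factorial (2*t+1):ℝ))
      ≤ (2:ℝ) ^ (2*t+1-1) / (Nat.factorial (2*t+1):ℝ) := by
    rw [div_le_div_iff₀ (by positivity) (by positivity)]
    have h0 : (0:ℝ) ≤ (2:ℝ) ^ (2*t+1-1) * (Nat.factorial (2*t+1):ℝ) := by positivity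
    have ht : (0:ℝ) ≤ (t:ℝ) := by positivity
    nlinarith
  linarith

lemma odd_coef_nonneg (t : ℕ) : 0 ≤ Scoef (2*t+1) := by
  unfold Scoef
  have h1 : ((-1:ℝ)) ^ (2*t+1+1) = 1 := by
    rw [show 2*t+1+1 = 2*(t+1) from by ring, pow_mul]; norm_num
  rw [h1]
  positivity

lemma Seven (m : ℕ) : 1/3 ≤ Spart (2*m+4) := by
  induction m with
  | zero => rw [show 2*0+4 = 4 from rfl, S4]
  | succ n ih =>
      have e : 2*(n+1)+4 = (2*n+4)+1+1 := by ring
      rw [e, Sstep, Sstep]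
      have := pair_nonneg (n+2)
      have e1 : 2*(n+2)+1 = 2*n+4+1 := by ring
      have e2 : 2*(n+2)+2 = 2*n+4+1+1 := by ring
      rw [e1, e2] at this
      linarith

lemma Sge (n : ℕ) (hn : 3 ≤ n) : 1/3 ≤ Spart n := by
  rcases Nat.even_or_odd n with ⟨m, hm⟩ | ⟨m, hm⟩
  · -- n = 2m, m ≥ 2
    have hm2 : 2 ≤ m := by omega
    have : n = 2*(m-2)+4 := by omega
    rw [this]; exact Seven (m-2)
  · -- n = 2m+1, m ≥ 1
    have hm1 : 1 ≤ m := by omega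
    rcases Nat.eq_or_lt_of_le hm1 with h | h
    · have : n = 3 := by omega
      rw [this, S3]; norm_num
    · have hrep : n = (2*(m-2)+4) + 1 := by omega
      rw [hrep, Sstep]
      have h1 := Seven (m-2)
      have h2 := odd_coef_nonneg (m-2+2)
      have : 2*(m-2+2)+1 = 2*(m-2)+4+1 := by ring
      rw [this] at h2
      linarith


lemma Lstep (n : ℕ) : Lseg (n + 1) = Lseg n + Spart (n + 1) := by
  unfold Lseg Spart Scoef
  have h : ∀ j ∈ Finset.Icc 1 (n + 1),
      (-1 : ℝ) ^ (j + 1) * (2 ^ (j - 1) / (Nat.factorial j : ℝ)) * (((n + 1 : ℕ) : ℝ) - (j : ℝ) + 1)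
      = (-1 : ℝ) ^ (j + 1) * (2 ^ (j - 1) / (Nat.factorial j : ℝ)) * ((n : ℝ) - (j : ℝ) + 1)
        + (-1 : ℝ) ^ (j + 1) * (2 ^ (j - 1) / (Nat.factorial j : ℝ)) := by
    intro j _
    push_cast
    ring
  rw [Finset.sum_congr rfl h, Finset.sum_add_distrib,
      Finset.sum_Icc_succ_top (by omega : 1 ≤ n + 1)]
  push_cast
  ring

/-- For every `k ≥ 3`, `C_k = 1 + L_{k−3} ≤ L_k`: the expected number of departures
from a fully occupied circle of `k` nodes is at most that from a fully occupied line
of `k` nodes. -/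
theorem circle_le_line (k : ℕ) (hk : 3 ≤ k) : 1 + Lseg (k - 3) ≤ Lseg k := by
  obtain ⟨n, rfl⟩ : ∃ n, k = n + 3 := ⟨k - 3, by omega⟩
  have hk3 : n + 3 - 3 = n := by omega
  have a1 : Lseg (n + 1) = Lseg n + Spart (n + 1) := Lstep n
  have a2 : Lseg (n + 2) = Lseg (n + 1) + Spart (n + 2) := Lstep (n + 1)
  have a3 : Lseg (n + 3) = Lseg (n + 2) + Spart (n + 3) := Lstep (n + 2)
  have hdec : Lseg (n + 3) = Lseg n + Spart (n + 1) + Spart (n + 2) + Spart (n + 3) := by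
    rw [a3, a2, a1]
  rw [hk3, hdec]
  match n with
  | 0 =>
      rw [show (0:ℕ)+1 = 1 from rfl, show (0:ℕ)+2 = 2 from rfl, show (0:ℕ)+3 = 3 from rfl,
        S1, S2, S3]
      linarith
  | 1 =>
      rw [show (1:ℕ)+1 = 2 from rfl, show (1:ℕ)+2 = 3 from rfl, show (1:ℕ)+3 = 4 from rfl,
        S2, S3, S4]
      linarith
  | (m+2) =>
      have h1 := Sge (m+2+1) (by omega)
      have h2 := Sge (m+2+2) (by omega)
      have h3 := Sge (m+2+3) (by omega)
      linarith
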